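/- Define P̂_Γ : ℝ^{n−1} → ℝ by P̂_Γ(x) = P_Γ(x₁,…,x_{n−1},0). For u ∈ ℝⁿ write ū = (u₁,…,u_{n−1}) and ē = (1,…,1) ∈ ℝ^{n−1}, and for a set U ⊆ ℝⁿ let Ū denote its coordinate projection. Then: (i) for all u ∈ ℝⁿ, the projection of ∂P_Γ(u) onto the first n−1 coordinates equals ∂P̂_Γ(ū − u_n ē); (ii) the projection of ∂P_Γ(ℝⁿ) equals ∂P̂_Γ(ℝ^{n−1}); (iii) P_Γ is differentiable at u if and only if P̂_Γ is differentiable at ū − u_n ē; and (iv) if P̂_Γ has all n−1 partial derivatives at ū − u_n ē, then P_Γ is differentiable at u with ∇P_Γ(u) = (∂₁P̂_Γ(ū−u_n ē),…,∂_{n−1}P̂_Γ(ū−u_n ē), 1 − Σ_{i=1}^{n−1} ∂_iP̂_Γ(ū−u_n ē)). -/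

import Mathlib

open Filter Topology Matrix
open scoped Classical

namespace Soft

/-! Basic notions for nearest-neighbour subshifts of finite type (NNSOFT) on `ℤ^d`:
boxes, allowed colorings, color counts, the grand partition function `Z_Γ(m,u)`. -/

/-- The set of sites of the box `⟨m⟩ = [m₁] × ⋯ × [m_d]` (zero-indexed). -/
def box {d : ℕ} (m : Fin d → ℕ) : Set (Fin d → ℕ) := {x | ∀ i, x i < m i}

/-- The site `x + e_k`. -/
def step {d : ℕ} (x : Fin d → ℕ) (k : Fin d) : Fin d → ℕ :=
  Function.update x k (x k + 1)

/-- `vol(m) = m₁ ⋯ m_d`. -/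
def vol {d : ℕ} (m : Fin d → ℕ) : ℕ := ∏ i, m i

/-- `φ` satisfies all nearest-neighbour constraints imposed by `Γ` inside the box `⟨m⟩`:
whenever `x` and `x + e_k` both lie in the box, `(φ x, φ (x + e_k)) ∈ Γ k`. -/
def Allowed {d n : ℕ} (Γ : Fin d → Set (Fin n × Fin n)) (m : Fin d → ℕ)
    (φ : (Fin d → ℕ) → Fin n) : Prop :=
  ∀ x ∈ box m, ∀ k : Fin d, step x k ∈ box m → (φ x, φ (step x k)) ∈ Γ k

/-- `φ` takes the default color `0` outside the box `⟨m⟩`; colorings of `⟨m⟩` are represented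
by functions on all of `ℕ^d` normalized in this way (so that there are finitely many). -/
def Normalized {d n : ℕ} [NeZero n] (m : Fin d → ℕ) (φ : (Fin d → ℕ) → Fin n) : Prop :=
  ∀ x, x ∉ box m → φ x = 0

/-- `C_Γ(⟨m⟩)`: the set of `Γ`-allowed colorings of the box `⟨m⟩`. -/
def Col {d n : ℕ} [NeZero n] (Γ : Fin d → Set (Fin n × Fin n)) (m : Fin d → ℕ) :
    Set ((Fin d → ℕ) → Fin n) :=
  {φ | Allowed Γ m φ ∧ Normalized m φ}

/-- `Γ`-allowed colorings of the whole lattice `ℤ^d`. -/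
def AllowedZ {d n : ℕ} (Γ : Fin d → Set (Fin n × Fin n)) (φ : (Fin d → ℤ) → Fin n) : Prop :=
  ∀ (x : Fin d → ℤ) (k : Fin d), (φ x, φ (Function.update x k (x k + 1))) ∈ Γ k

/-- `c(φ)_j`: the number of sites of `⟨m⟩` colored `j` by `φ`. -/
noncomputable def cnt {d n : ℕ} (m : Fin d → ℕ) (φ : (Fin d → ℕ) → Fin n) (j : Fin n) : ℕ :=
  Nat.card {x : Fin d → ℕ // x ∈ box m ∧ φ x = j}

/-- The weight `exp (c(φ)ᵀ u)` of a coloring `φ` of `⟨m⟩`. -/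
noncomputable def weight {d n : ℕ} (m : Fin d → ℕ) (φ : (Fin d → ℕ) → Fin n)
    (u : Fin n → ℝ) : ℝ :=
  Real.exp (∑ j, (cnt m φ j : ℝ) * u j)

/-- The grand partition function `Z_Γ(m,u) = Σ_{φ ∈ C_Γ(⟨m⟩)} exp (c(φ)ᵀ u)`. -/
noncomputable def Z {d n : ℕ} [NeZero n] (Γ : Fin d → Set (Fin n × Fin n)) (m : Fin d → ℕ)
    (u : Fin n → ℝ) : ℝ :=
  ∑' φ : Col Γ m, weight m φ.1 u

/-- `y` is a subgradient of `f` at `u`. -/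
def Subgrad {N : ℕ} (f : (Fin N → ℝ) → ℝ) (u y : Fin N → ℝ) : Prop :=
  ∀ z, f u + ∑ i, y i * (z i - u i) ≤ f z

/-- The conjugate convex function `f*(p) = sup_u (pᵀu − f(u))`, with values in `EReal`. -/
noncomputable def conj {N : ℕ} (f : (Fin N → ℝ) → ℝ) (p : Fin N → ℝ) : EReal :=
  ⨆ u : Fin N → ℝ, (((∑ i, p i * u i) - f u : ℝ) : EReal)

/-- The gradient vector associated with a continuous linear functional on `ℝⁿ`. -/
noncomputable def gradOf {N : ℕ} (L : (Fin N → ℝ) →L[ℝ] ℝ) : Fin N → ℝ :=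
  fun i => L (Pi.single i 1)

/-- `f` is differentiable at `v`. -/
def DiffPt {N : ℕ} (f : (Fin N → ℝ) → ℝ) (v : Fin N → ℝ) : Prop :=
  ∃ L : (Fin N → ℝ) →L[ℝ] ℝ, HasFDerivAt f L v

/-- `P̂_Γ(x) = P_Γ(x₁,…,x_{n−1},0)` (total number of colors is `n + 1`). -/
noncomputable def Phat {n : ℕ} (P : (Fin (n + 1) → ℝ) → ℝ) (x : Fin n → ℝ) : ℝ :=
  P (Fin.snoc x 0)

/-- `ū = (u₁,…,u_{n−1})`, the projection onto the first `n` of `n + 1` coordinates. -/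
def projv {n : ℕ} (u : Fin (n + 1) → ℝ) : Fin n → ℝ := fun i => u i.castSucc



lemma box_finite {d : ℕ} (m : Fin d → ℕ) : (box m).Finite := by
  have h : box m = Set.pi Set.univ (fun i => Set.Iio (m i)) := by
    ext x; simp [box, Set.mem_pi]
  rw [h]
  exact Set.Finite.pi (fun i => Set.finite_Iio _)

lemma col_finite {d n : ℕ} [NeZero n] (Γ : Fin d → Set (Fin n × Fin n)) (m : Fin d → ℕ) :
    (Col Γ m).Finite := by
  have hsub : (Col Γ m) ⊆ {φ | ∀ x ∉ box m, φ x = 0} := fun φ hφ => hφ.2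
  refine Set.Finite.subset ?_ hsub
  haveI := (box_finite m).fintype
  rw [← Set.finite_coe_iff]
  refine Finite.of_injective
    (fun φ : {φ : (Fin d → ℕ) → Fin n | ∀ x ∉ box m, φ x = 0} =>
      (fun x : ↥(box m) => φ.1 x.1 : ↥(box m) → Fin n)) ?_
  rintro ⟨φ, hφ⟩ ⟨ψ, hψ⟩ h
  apply Subtype.ext
  funext x
  by_cases hx : x ∈ box m
  · exact congrFun h ⟨x, hx⟩
  · show φ x = ψ x
    rw [hφ x hx, hψ x hx]

lemma col_nonempty {d n : ℕ} [NeZero n] {Γ : Fin d → Set (Fin n × Fin n)}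
    (hne : ∃ φ : (Fin d → ℤ) → Fin n, AllowedZ Γ φ) (m : Fin d → ℕ) :
    (Col Γ m).Nonempty := by
  obtain ⟨ψ, hψ⟩ := hne
  refine ⟨fun x => if x ∈ box m then ψ (fun i => (x i : ℤ)) else 0, ?_, ?_⟩
  · intro x hx k hk
    simp only [if_pos hx, if_pos hk]
    have key : (fun i => ((step x k) i : ℤ)) =
        Function.update (fun i => (x i : ℤ)) k ((x k : ℤ) + 1) := by
      funext i
      by_cases hik : i = k
      · subst hik; simp [step]
      · simp [step, Function.update_apply, hik]
    rw [key]
    exact hψ (fun i => (x i : ℤ)) k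
  · intro x hx; simp [hx]

lemma sum_cnt {d n : ℕ} (m : Fin d → ℕ) (φ : (Fin d → ℕ) → Fin n) :
    ∑ j, cnt m φ j = vol m := by
  classical
  have e1 : ↥(box m) ≃ (∀ i, Fin (m i)) :=
    { toFun := fun x => fun i => ⟨x.1 i, x.2 i⟩
      invFun := fun y => ⟨fun i => (y i).1, fun i => (y i).2⟩
      left_inv := fun x => rfl
      right_inv := fun y => rfl }
  haveI : Fintype ↥(box m) := Fintype.ofEquiv _ e1.symm
  have hbox : Nat.card ↥(box m) = vol m := by
    rw [Nat.card_congr e1, Nat.card_pi]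
    simp [vol]
  have e2 : ∀ j : Fin n, {x : Fin d → ℕ // x ∈ box m ∧ φ x = j} ≃
      {y : ↥(box m) // φ y.1 = j} :=
    fun j =>
    { toFun := fun x => ⟨⟨x.1, x.2.1⟩, x.2.2⟩
      invFun := fun y => ⟨y.1.1, y.1.2, y.2⟩
      left_inv := fun x => rfl
      right_inv := fun y => rfl }
  have e3 : (Σ j : Fin n, {y : ↥(box m) // φ y.1 = j}) ≃ ↥(box m) :=
    Equiv.sigmaFiberEquiv (fun y : ↥(box m) => φ y.1)
  calc ∑ j, cnt m φ j = ∑ j, Nat.card {y : ↥(box m) // φ y.1 = j} := by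
        refine Finset.sum_congr rfl fun j _ => ?_
        exact Nat.card_congr (e2 j)
    _ = Nat.card ↥(box m) := by
        rw [← Nat.card_congr e3]
        simp_rw [Nat.card_eq_fintype_card]
        rw [Fintype.card_sigma]
    _ = vol m := hbox

lemma Z_pos {d n : ℕ} [NeZero n] {Γ : Fin d → Set (Fin n × Fin n)}
    (hne : ∃ φ : (Fin d → ℤ) → Fin n, AllowedZ Γ φ) (m : Fin d → ℕ) (u : Fin n → ℝ) :
    0 < Z Γ m u := by
  haveI := (col_finite Γ m).fintype
  rw [Z, tsum_fintype]
  haveI : Nonempty ↥(Col Γ m) := (col_nonempty hne m).to_subtype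
  exact Finset.sum_pos (fun φ _ => Real.exp_pos _) Finset.univ_nonempty

lemma Z_shift {d n : ℕ} [NeZero n] (Γ : Fin d → Set (Fin n × Fin n)) (m : Fin d → ℕ)
    (u : Fin n → ℝ) (t : ℝ) :
    Z Γ m (u + t • (1 : Fin n → ℝ)) = Real.exp (t * vol m) * Z Γ m u := by
  haveI := (col_finite Γ m).fintype
  rw [Z, Z, tsum_fintype, tsum_fintype, Finset.mul_sum]
  refine Finset.sum_congr rfl fun φ _ => ?_
  rw [weight, weight, ← Real.exp_add]
  congr 1
  have h1 : ∑ j, (cnt m φ.1 j : ℝ) * (u + t • (1 : Fin n → ℝ)) j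
      = ∑ j, ((cnt m φ.1 j : ℝ) * u j + t * (cnt m φ.1 j : ℝ)) := by
    refine Finset.sum_congr rfl fun j _ => ?_
    simp only [Pi.add_apply, Pi.smul_apply, Pi.one_apply, smul_eq_mul, mul_one]
    ring
  have h2 : ∑ j, (cnt m φ.1 j : ℝ) = (vol m : ℝ) := by
    rw [← Nat.cast_sum, sum_cnt]
  rw [h1, Finset.sum_add_distrib, ← Finset.mul_sum, h2]
  ring

lemma P_shift {d n : ℕ} [NeZero n] {Γ : Fin d → Set (Fin n × Fin n)}
    (hne : ∃ φ : (Fin d → ℤ) → Fin n, AllowedZ Γ φ)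
    {P : (Fin n → ℝ) → ℝ}
    (hP : ∀ u, Tendsto (fun m : Fin d → ℕ =>
        Real.log (Z Γ m u) / (vol m : ℝ)) atTop (𝓝 (P u)))
    (u : Fin n → ℝ) (t : ℝ) :
    P (u + t • (1 : Fin n → ℝ)) = P u + t := by
  have h1 := hP (u + t • (1 : Fin n → ℝ))
  have h2 : Tendsto (fun m : Fin d → ℕ =>
      Real.log (Z Γ m (u + t • (1 : Fin n → ℝ))) / (vol m : ℝ)) atTop (𝓝 (P u + t)) := by
    have h3 : ∀ᶠ m : (Fin d → ℕ) in atTop,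
        Real.log (Z Γ m u) / (vol m : ℝ) + t
        = Real.log (Z Γ m (u + t • (1 : Fin n → ℝ))) / (vol m : ℝ) := by
      filter_upwards [Filter.eventually_ge_atTop (fun _ => 1 : Fin d → ℕ)] with m hm
      have hvol : 0 < vol m := Finset.prod_pos (fun i _ => hm i)
      have hvolR : (0:ℝ) < (vol m : ℝ) := by exact_mod_cast hvol
      rw [Z_shift, Real.log_mul (Real.exp_pos _).ne' (Z_pos hne m u).ne', Real.log_exp]
      field_simp
      ring
    exact Tendsto.congr' h3 ((hP u).add_const t)
  exact tendsto_nhds_unique h1 h2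

lemma weight_pos {d n : ℕ} (m : Fin d → ℕ) (φ : (Fin d → ℕ) → Fin n) (u : Fin n → ℝ) :
    0 < weight m φ u := Real.exp_pos _

lemma P_convex {d n : ℕ} [NeZero n] {Γ : Fin d → Set (Fin n × Fin n)}
    (hne : ∃ φ : (Fin d → ℤ) → Fin n, AllowedZ Γ φ)
    {P : (Fin n → ℝ) → ℝ}
    (hP : ∀ u, Tendsto (fun m : Fin d → ℕ =>
        Real.log (Z Γ m u) / (vol m : ℝ)) atTop (𝓝 (P u))) :
    ConvexOn ℝ Set.univ P := by
  refine ⟨convex_univ, ?_⟩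
  intro u _ v _ a b ha hb hab
  rcases eq_or_lt_of_le ha with ha0 | ha
  · have hb1 : b = 1 := by linarith
    simp [← ha0, hb1]
  rcases eq_or_lt_of_le hb with hb0 | hb
  · have ha1 : a = 1 := by linarith
    simp [← hb0, ha1]
  have key : ∀ m : Fin d → ℕ,
      Real.log (Z Γ m (a • u + b • v)) / (vol m : ℝ)
      ≤ a • (Real.log (Z Γ m u) / (vol m : ℝ)) + b • (Real.log (Z Γ m v) / (vol m : ℝ)) := by
    intro m
    haveI := (col_finite Γ m).fintype
    have hZ : Z Γ m (a • u + b • v) ≤ (Z Γ m u) ^ a * (Z Γ m v) ^ b := by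
      rw [Z, Z, Z, tsum_fintype, tsum_fintype, tsum_fintype]
      have hconj : (1/a).HolderConjugate (1/b) := by
        rw [Real.holderConjugate_iff]
        constructor
        · rw [lt_div_iff₀ ha]; linarith
        · rw [one_div, one_div, inv_inv, inv_inv]; exact hab
      calc ∑ φ : ↥(Col Γ m), weight m φ.1 (a • u + b • v)
          = ∑ φ : ↥(Col Γ m), (weight m φ.1 u) ^ a * (weight m φ.1 v) ^ b := by
            refine Finset.sum_congr rfl fun φ _ => ?_
            have hsum : ∑ j, (cnt m φ.1 j : ℝ) * (a • u + b • v) j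
                = (∑ j, (cnt m φ.1 j : ℝ) * u j) * a + (∑ j, (cnt m φ.1 j : ℝ) * v j) * b := by
              rw [Finset.sum_mul, Finset.sum_mul, ← Finset.sum_add_distrib]
              refine Finset.sum_congr rfl fun j _ => ?_
              simp only [Pi.add_apply, Pi.smul_apply, smul_eq_mul]
              ring
            rw [weight, weight, weight, hsum, Real.exp_add, Real.exp_mul, Real.exp_mul]
        _ ≤ (∑ φ : ↥(Col Γ m), ((weight m φ.1 u) ^ a) ^ (1/a)) ^ (1/(1/a)) *
            (∑ φ : ↥(Col Γ m), ((weight m φ.1 v) ^ b) ^ (1/b)) ^ (1/(1/b)) :=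
            Real.inner_le_Lp_mul_Lq_of_nonneg (s := Finset.univ) hconj
              (fun i _ => Real.rpow_nonneg (Real.exp_pos _).le _)
              (fun i _ => Real.rpow_nonneg (Real.exp_pos _).le _)
        _ = (∑ φ : ↥(Col Γ m), weight m φ.1 u) ^ a *
            (∑ φ : ↥(Col Γ m), weight m φ.1 v) ^ b := by
            rw [one_div_one_div, one_div_one_div]
            congr 2 <;> refine Finset.sum_congr rfl fun φ _ => ?_
            · rw [one_div a, Real.rpow_rpow_inv (weight_pos _ _ _).le ha.ne']
            · rw [one_div b, Real.rpow_rpow_inv (weight_pos _ _ _).le hb.ne']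
    have hlog : Real.log (Z Γ m (a • u + b • v))
        ≤ a * Real.log (Z Γ m u) + b * Real.log (Z Γ m v) := by
      have h1 := Real.log_le_log (Z_pos hne m _) hZ
      rwa [Real.log_mul (Real.rpow_pos_of_pos (Z_pos hne m u) a).ne'
        (Real.rpow_pos_of_pos (Z_pos hne m v) b).ne',
        Real.log_rpow (Z_pos hne m u), Real.log_rpow (Z_pos hne m v)] at h1
    have hinv : (0:ℝ) ≤ ((vol m : ℝ))⁻¹ := by positivity
    have h2 := mul_le_mul_of_nonneg_right hlog hinv
    calc Real.log (Z Γ m (a • u + b • v)) / (vol m : ℝ)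
        = Real.log (Z Γ m (a • u + b • v)) * ((vol m : ℝ))⁻¹ := div_eq_mul_inv _ _
      _ ≤ (a * Real.log (Z Γ m u) + b * Real.log (Z Γ m v)) * ((vol m : ℝ))⁻¹ := h2
      _ = a • (Real.log (Z Γ m u) / (vol m : ℝ)) + b • (Real.log (Z Γ m v) / (vol m : ℝ)) := by
          simp only [smul_eq_mul, div_eq_mul_inv]
          ring
  refine le_of_tendsto_of_tendsto' (hP (a • u + b • v))
    (((hP u).const_smul a).add ((hP v).const_smul b)) key

lemma update_eq_add_single {N : ℕ} (v : Fin N → ℝ) (i : Fin N) (τ : ℝ) :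
    Function.update v i (v i + τ) = v + τ • (Pi.single i (1:ℝ) : Fin N → ℝ) := by
  funext j
  by_cases hj : j = i
  · subst hj; simp
  · simp [Function.update_apply, hj, Pi.single_apply, Ne.symm hj]

lemma convexOn_hasFDerivAt {N : ℕ} {f : (Fin N → ℝ) → ℝ}
    (hf : ConvexOn ℝ Set.univ f) (v g : Fin N → ℝ)
    (hg : ∀ i, HasDerivAt (fun t => f (Function.update v i t)) (g i) (v i)) :
    HasFDerivAt f
      (∑ i, g i • (ContinuousLinearMap.proj i : (Fin N → ℝ) →L[ℝ] ℝ)) v := by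
  rcases Nat.eq_zero_or_pos N with hN | hN
  · subst hN
    have h0 : (∑ i : Fin 0, g i • (ContinuousLinearMap.proj i : (Fin 0 → ℝ) →L[ℝ] ℝ))
        = 0 := by simp
    rw [h0]
    exact hasFDerivAt_of_subsingleton f v
  have hNR : (0:ℝ) < N := by exact_mod_cast hN
  rw [hasFDerivAt_iff_isLittleO_nhds_zero]
  have hLapp : ∀ h : Fin N → ℝ,
      (∑ i, g i • (ContinuousLinearMap.proj i : (Fin N → ℝ) →L[ℝ] ℝ)) h
      = ∑ i, g i * h i := by
    intro h
    simp [ContinuousLinearMap.sum_apply, ContinuousLinearMap.proj_apply]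
  set F : (Fin N → ℝ) → ℝ := fun h => f (v + h) - f v - ∑ i, g i * h i with hF
  set r : Fin N → ℝ → ℝ :=
    fun i τ => f (Function.update v i (v i + τ)) - f v - g i * τ with hr
  -- each r i is o(τ)
  have hro : ∀ i, (fun τ : ℝ => r i τ) =o[𝓝 0] (fun τ : ℝ => τ) := by
    intro i
    have h1 := (hasDerivAt_iff_isLittleO (f := fun t => f (Function.update v i t))
      (x := v i) (f' := g i)).mp (hg i)
    have h2 : Tendsto (fun τ : ℝ => v i + τ) (𝓝 0) (𝓝 (v i)) := by
      simpa using (tendsto_const_nhds.add tendsto_id :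
        Tendsto (fun τ : ℝ => v i + τ) (𝓝 0) (𝓝 (v i + 0)))
    have h3 := h1.comp_tendsto h2
    simp only [Function.comp_def, add_sub_cancel_left, smul_eq_mul,
      Function.update_eq_self] at h3
    apply h3.congr' _ (Filter.Eventually.of_forall fun τ => rfl)
    filter_upwards with τ
    simp only [hr]
    ring
  -- the upper-bound function
  set U : (Fin N → ℝ) → ℝ := fun h => ∑ i, (1/(N:ℝ)) * r i ((N:ℝ) * h i) with hU
  have hUo : U =o[𝓝 0] (fun h : Fin N → ℝ => h) := by
    rw [show U = ∑ i : Fin N, (fun h : Fin N → ℝ => (1/(N:ℝ)) * r i ((N:ℝ) * h i)) from by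
      funext h; rw [Finset.sum_apply]]
    apply Asymptotics.IsLittleO.sum
    intro i _
    apply Asymptotics.IsLittleO.const_mul_left
    have h2 : Tendsto (fun h : Fin N → ℝ => (N:ℝ) * h i) (𝓝 0) (𝓝 0) := by
      have : Tendsto (fun h : Fin N → ℝ => h i) (𝓝 0) (𝓝 0) := by
        exact (continuous_apply i).tendsto' (0 : Fin N → ℝ) 0 rfl
      simpa using this.const_mul (N:ℝ)
    have h3 := (hro i).comp_tendsto h2
    refine h3.trans_isBigO ?_
    have h4 : (fun h : Fin N → ℝ => h i) =O[𝓝 0] (fun h : Fin N → ℝ => h) :=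
      (ContinuousLinearMap.proj i : (Fin N → ℝ) →L[ℝ] ℝ).isBigO_id _
    exact h4.const_mul_left (N:ℝ)
  -- F h ≤ U h
  have hFU : ∀ h : Fin N → ℝ, F h ≤ U h := by
    intro h
    have hmem : ∀ i ∈ Finset.univ (α := Fin N),
        v + ((N:ℝ) * h i) • (Pi.single i (1:ℝ) : Fin N → ℝ) ∈ Set.univ := fun _ _ => trivial
    have hw0 : ∀ i ∈ Finset.univ (α := Fin N), (0:ℝ) ≤ 1/(N:ℝ) := fun _ _ => by positivity
    have hw1 : ∑ _i : Fin N, (1/(N:ℝ)) = 1 := by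
      rw [Finset.sum_const, Finset.card_univ, Fintype.card_fin, nsmul_eq_mul]
      field_simp
    have hJ := hf.map_sum_le hw0 hw1 hmem
    have hpt : ∑ i, (1/(N:ℝ)) • (v + ((N:ℝ) * h i) • (Pi.single i (1:ℝ) : Fin N → ℝ)) = v + h := by
      have : ∀ i, (1/(N:ℝ)) • (v + ((N:ℝ) * h i) • (Pi.single i (1:ℝ) : Fin N → ℝ))
          = (1/(N:ℝ)) • v + h i • (Pi.single i (1:ℝ) : Fin N → ℝ) := by
        intro i
        rw [smul_add, smul_smul]
        congr 1
        congr 1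
        field_simp
      rw [Finset.sum_congr rfl fun i _ => this i, Finset.sum_add_distrib,
        ← Finset.sum_smul, hw1, one_smul]
      congr 1
      funext j
      simp only [Finset.sum_apply, Pi.smul_apply, smul_eq_mul, Pi.single_apply,
        mul_ite, mul_one, mul_zero]
      simp
    rw [hpt] at hJ
    simp only [smul_eq_mul] at hJ
    have hexp : ∀ i, (1/(N:ℝ)) * f (v + ((N:ℝ) * h i) • (Pi.single i (1:ℝ) : Fin N → ℝ))
        = (1/(N:ℝ)) * r i ((N:ℝ) * h i) + (1/(N:ℝ)) * f v + g i * h i := by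
      intro i
      rw [← update_eq_add_single]
      simp only [hr]
      field_simp
      ring
    calc F h = f (v + h) - f v - ∑ i, g i * h i := rfl
      _ ≤ (∑ i, (1/(N:ℝ)) * f (v + ((N:ℝ) * h i) • (Pi.single i (1:ℝ) : Fin N → ℝ))) - f v - ∑ i, g i * h i := by
          linarith [hJ]
      _ = U h := by
          rw [Finset.sum_congr rfl fun i _ => hexp i]
          rw [Finset.sum_add_distrib, Finset.sum_add_distrib, ← Finset.sum_mul, hw1]
          simp only [hU]
          ring
  -- F h ≥ - F (-h)
  have hFlow : ∀ h : Fin N → ℝ, -F (-h) ≤ F h := by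
    intro h
    have hmid := hf.2 (Set.mem_univ (v + h)) (Set.mem_univ (v + (-h)))
      (by norm_num : (0:ℝ) ≤ 1/2) (by norm_num : (0:ℝ) ≤ 1/2) (by norm_num)
    have hpt : (1/2:ℝ) • (v + h) + (1/2:ℝ) • (v + (-h)) = v := by
      funext j
      simp only [Pi.add_apply, Pi.smul_apply, Pi.neg_apply, smul_eq_mul]
      ring
    rw [hpt] at hmid
    have hlin : ∑ i, g i * (-h) i = -∑ i, g i * h i := by
      rw [← Finset.sum_neg_distrib]
      exact Finset.sum_congr rfl fun i _ => by simp only [Pi.neg_apply]; ring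
    have hmid' : 2 * f v ≤ f (v + h) + f (v + (-h)) := by
      simp only [smul_eq_mul] at hmid; linarith
    have e1 : F h = f (v + h) - f v - ∑ i, g i * h i := rfl
    have e2 : F (-h) = f (v + (-h)) - f v + ∑ i, g i * h i := by
      simp only [hF]
      rw [hlin]
      ring
    linarith
  -- conclude
  have hW : F =O[𝓝 0] (fun h => |U h| + |U (-h)|) := by
    apply Asymptotics.IsBigO.of_bound 1
    filter_upwards with h
    rw [one_mul, Real.norm_eq_abs, Real.norm_eq_abs]
    rw [abs_of_nonneg (by positivity : (0:ℝ) ≤ |U h| + |U (-h)|)]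
    rw [abs_le]
    constructor
    · have := hFlow h
      have := hFU (-h)
      have h1 : -F h ≤ U (-h) := by linarith
      have h2 : U (-h) ≤ |U (-h)| := le_abs_self _
      linarith [abs_nonneg (U h)]
    · have h1 := hFU h
      have h2 : U h ≤ |U h| := le_abs_self _
      linarith [abs_nonneg (U (-h))]
  have hWo : (fun h : Fin N → ℝ => |U h| + |U (-h)|) =o[𝓝 0] (fun h : Fin N → ℝ => h) := by
    apply Asymptotics.IsLittleO.add
    · simpa [Real.norm_eq_abs] using hUo.norm_left
    · have hneg : Tendsto (fun h : Fin N → ℝ => -h) (𝓝 0) (𝓝 0) := by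
        simpa using (continuous_neg.tendsto (0 : Fin N → ℝ))
      have := (hUo.comp_tendsto hneg)
      simp only [Function.comp_def] at this
      have h2 : (fun h : Fin N → ℝ => -h) =O[𝓝 0] (fun h : Fin N → ℝ => h) :=
        (Asymptotics.isBigO_refl _ _).neg_left
      have h3 := this.trans_isBigO h2
      simpa [Real.norm_eq_abs] using h3.norm_left
  have hfinal := hW.trans_isLittleO hWo
  apply hfinal.congr' _ (Filter.Eventually.of_forall fun h => rfl)
  filter_upwards with h
  rw [hLapp h]

section Structural

variable {n : ℕ}

/-- The reduction map `u ↦ ū - uₙ ē`. -/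
noncomputable def vm (u : Fin (n+1) → ℝ) : Fin n → ℝ :=
  projv u - u (Fin.last n) • (1 : Fin n → ℝ)

lemma vm_apply (u : Fin (n+1) → ℝ) (i : Fin n) :
    vm u i = u i.castSucc - u (Fin.last n) := by
  simp [vm, projv]

lemma projv_snoc (q : Fin n → ℝ) (c : ℝ) : projv (Fin.snoc q c) = q := by
  funext i; simp [projv]

lemma vm_snoc_zero (x : Fin n → ℝ) : vm (Fin.snoc x (0:ℝ)) = x := by
  funext i
  rw [vm_apply]
  simp

lemma master {P : (Fin (n+1) → ℝ) → ℝ}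
    (hs : ∀ u t, P (u + t • (1 : Fin (n+1) → ℝ)) = P u + t) (u : Fin (n+1) → ℝ) :
    P u = Phat P (vm u) + u (Fin.last n) := by
  have hu : u = Fin.snoc (vm u) (0:ℝ) + u (Fin.last n) • (1 : Fin (n+1) → ℝ) := by
    funext j
    induction j using Fin.lastCases with
    | last => simp
    | cast i =>
        simp only [Pi.add_apply, Fin.snoc_castSucc, Pi.smul_apply, Pi.one_apply,
          smul_eq_mul, mul_one, vm_apply]
        ring
  conv_lhs => rw [hu]
  rw [hs, Phat]

lemma sub_forward {P : (Fin (n+1) → ℝ) → ℝ}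
    (hs : ∀ u t, P (u + t • (1 : Fin (n+1) → ℝ)) = P u + t)
    {u y : Fin (n+1) → ℝ} (hy : Subgrad P u y) :
    Subgrad (Phat P) (vm u) (projv y) := by
  intro x
  set z : Fin (n+1) → ℝ :=
    Fin.snoc x (0:ℝ) + u (Fin.last n) • (1 : Fin (n+1) → ℝ) with hz
  have hzc : ∀ i : Fin n, z i.castSucc = x i + u (Fin.last n) := by
    intro i; simp [hz]
  have hzl : z (Fin.last n) = u (Fin.last n) := by simp [hz]
  have hvz : vm z = x := by
    funext i; rw [vm_apply, hzc, hzl]; ring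
  have hPz : P z = Phat P x + u (Fin.last n) := by
    rw [master hs z, hvz, hzl]
  have hPu : P u = Phat P (vm u) + u (Fin.last n) := master hs u
  have hsum : ∑ i : Fin (n+1), y i * (z i - u i)
      = ∑ i : Fin n, projv y i * (x i - vm u i) := by
    rw [Fin.sum_univ_castSucc, hzl, sub_self, mul_zero, add_zero]
    refine Finset.sum_congr rfl fun i _ => ?_
    rw [hzc, vm_apply, projv]
    ring
  have := hy z
  rw [hsum, hPz, hPu] at this
  linarith

lemma sub_backward {P : (Fin (n+1) → ℝ) → ℝ}
    (hs : ∀ u t, P (u + t • (1 : Fin (n+1) → ℝ)) = P u + t)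
    {u : Fin (n+1) → ℝ} {q : Fin n → ℝ} (hq : Subgrad (Phat P) (vm u) q) :
    Subgrad P u (Fin.snoc q (1 - ∑ i, q i)) := by
  intro z
  have hsum : ∑ i : Fin (n+1), (Fin.snoc q (1 - ∑ i, q i) : Fin (n+1) → ℝ) i * (z i - u i)
      = (∑ i : Fin n, q i * (vm z i - vm u i)) + (z (Fin.last n) - u (Fin.last n)) := by
    rw [Fin.sum_univ_castSucc]
    simp only [Fin.snoc_castSucc, Fin.snoc_last]
    have e1 : ∀ i : Fin n, q i * (vm z i - vm u i)
        = q i * (z i.castSucc - u i.castSucc)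
          - q i * (z (Fin.last n) - u (Fin.last n)) := by
      intro i; rw [vm_apply, vm_apply]; ring
    rw [Finset.sum_congr rfl fun i _ => e1 i, Finset.sum_sub_distrib, ← Finset.sum_mul]
    ring
  have hPz : P z = Phat P (vm z) + z (Fin.last n) := master hs z
  have hPu : P u = Phat P (vm u) + u (Fin.last n) := master hs u
  have := hq (vm z)
  rw [hsum, hPz, hPu]
  linarith

/-- The reduction map as a continuous linear map. -/
noncomputable def Vmap (n : ℕ) : (Fin (n+1) → ℝ) →L[ℝ] (Fin n → ℝ) :=
  ContinuousLinearMap.pi (fun i : Fin n =>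
    (ContinuousLinearMap.proj i.castSucc : (Fin (n+1) → ℝ) →L[ℝ] ℝ)
      - ContinuousLinearMap.proj (Fin.last n))

lemma Vmap_apply (u : Fin (n+1) → ℝ) : Vmap n u = vm u := by
  funext i
  rw [vm_apply]
  simp [Vmap]

/-- The section `x ↦ (x, 0)` as a continuous linear map. -/
noncomputable def Smap (n : ℕ) : (Fin n → ℝ) →L[ℝ] (Fin (n+1) → ℝ) :=
  ContinuousLinearMap.pi (fun j : Fin (n+1) =>
    Fin.lastCases 0 (fun i => (ContinuousLinearMap.proj i : (Fin n → ℝ) →L[ℝ] ℝ)) j)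

lemma Smap_apply (x : Fin n → ℝ) : Smap n x = Fin.snoc x (0:ℝ) := by
  funext j
  induction j using Fin.lastCases with
  | last => simp [Smap]
  | cast i => simp [Smap]

end Structural

section Diff

variable {n : ℕ}

lemma vm_add_smul_one (w : Fin (n+1) → ℝ) (c : ℝ) :
    vm (w + c • (1 : Fin (n+1) → ℝ)) = vm w := by
  funext i
  rw [vm_apply, vm_apply]
  simp only [Pi.add_apply, Pi.smul_apply, Pi.one_apply, smul_eq_mul, mul_one]
  ring

lemma diff_backward {P : (Fin (n+1) → ℝ) → ℝ}
    (hs : ∀ u t, P (u + t • (1 : Fin (n+1) → ℝ)) = P u + t)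
    {u : Fin (n+1) → ℝ} {L' : (Fin n → ℝ) →L[ℝ] ℝ}
    (hL' : HasFDerivAt (Phat P) L' (vm u)) :
    HasFDerivAt P (L'.comp (Vmap n) + ContinuousLinearMap.proj (Fin.last n)) u := by
  have h1 : HasFDerivAt (fun w => Phat P (Vmap n w)) (L'.comp (Vmap n)) u := by
    have hv : HasFDerivAt (fun w => Vmap n w) (Vmap n) u := (Vmap n).hasFDerivAt
    rw [← Vmap_apply] at hL'
    exact hL'.comp u hv
  have h2 : HasFDerivAt (fun w : Fin (n+1) → ℝ => w (Fin.last n))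
      (ContinuousLinearMap.proj (Fin.last n) : (Fin (n+1) → ℝ) →L[ℝ] ℝ) u := by
    exact (ContinuousLinearMap.proj (Fin.last n) :
      (Fin (n+1) → ℝ) →L[ℝ] ℝ).hasFDerivAt (x := u)
  exact (h1.add h2).congr_of_eventuallyEq (Filter.Eventually.of_forall fun w => by
    show P w = Phat P (Vmap n w) + w (Fin.last n)
    rw [Vmap_apply, ← master hs w])

lemma smap_vm_add (u : Fin (n+1) → ℝ) :
    Smap n (vm u) + u (Fin.last n) • (1 : Fin (n+1) → ℝ) = u := by
  rw [Smap_apply]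
  funext j
  induction j using Fin.lastCases with
  | last => simp
  | cast i =>
      simp only [Pi.add_apply, Fin.snoc_castSucc, Pi.smul_apply, Pi.one_apply,
        smul_eq_mul, mul_one, vm_apply]
      ring

lemma diff_forward {P : (Fin (n+1) → ℝ) → ℝ}
    (hs : ∀ u t, P (u + t • (1 : Fin (n+1) → ℝ)) = P u + t)
    {u : Fin (n+1) → ℝ} {L : (Fin (n+1) → ℝ) →L[ℝ] ℝ}
    (hL : HasFDerivAt P L u) :
    HasFDerivAt (Phat P) (L.comp (Smap n)) (vm u) := by
  have hA : HasFDerivAt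
      (fun x : Fin n → ℝ => Smap n x + u (Fin.last n) • (1 : Fin (n+1) → ℝ))
      (Smap n) (vm u) := ((Smap n).hasFDerivAt).add_const _
  rw [← smap_vm_add u] at hL
  have hcomp := hL.comp (vm u) hA
  have h2 := hcomp.sub_const (u (Fin.last n))
  refine h2.congr_of_eventuallyEq (Filter.Eventually.of_forall fun x => ?_)
  have : P (Smap n x + u (Fin.last n) • (1 : Fin (n+1) → ℝ))
      = Phat P x + u (Fin.last n) := by
    rw [master hs, vm_add_smul_one, Smap_apply, vm_snoc_zero]
    congr 1
    simp [Smap_apply]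
  show Phat P x = P (Smap n x + u (Fin.last n) • (1 : Fin (n+1) → ℝ)) - u (Fin.last n)
  rw [this]
  ring

lemma Phat_convex {P : (Fin (n+1) → ℝ) → ℝ} (hc : ConvexOn ℝ Set.univ P) :
    ConvexOn ℝ Set.univ (Phat P) := by
  refine ⟨convex_univ, fun x _ y _ a b ha hb hab => ?_⟩
  have h := hc.2 (Set.mem_univ (Fin.snoc x (0:ℝ))) (Set.mem_univ (Fin.snoc y (0:ℝ)))
    ha hb hab
  have e : a • (Fin.snoc x (0:ℝ) : Fin (n+1) → ℝ) + b • (Fin.snoc y (0:ℝ) : Fin (n+1) → ℝ)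
      = (Fin.snoc (a • x + b • y) (0:ℝ) : Fin (n+1) → ℝ) := by
    funext j
    induction j using Fin.lastCases with
    | last => simp
    | cast i => simp
  rw [e] at h
  exact h

lemma gradOf_eq {L₀ : (Fin n → ℝ) →L[ℝ] ℝ} {g : Fin n → ℝ}
    (hL₀ : ∀ x, L₀ x = ∑ i, g i * x i) :
    gradOf (L₀.comp (Vmap n) + ContinuousLinearMap.proj (Fin.last n))
      = Fin.snoc g (1 - ∑ i, g i) := by
  funext j
  rw [gradOf]
  simp only [ContinuousLinearMap.add_apply, ContinuousLinearMap.comp_apply,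
    ContinuousLinearMap.proj_apply]
  induction j using Fin.lastCases with
  | last =>
      have hv : Vmap n (Pi.single (Fin.last n) (1:ℝ)) = -(1 : Fin n → ℝ) := by
        funext k
        rw [Vmap_apply, vm_apply]
        simp [Pi.single_apply, (Fin.castSucc_lt_last k).ne]
      rw [hv, hL₀]
      simp [Fin.snoc_last]
      ring
  | cast i =>
      have hv : Vmap n (Pi.single i.castSucc (1:ℝ)) = Pi.single i (1:ℝ) := by
        funext k
        rw [Vmap_apply, vm_apply]
        simp [Pi.single_apply, (Fin.castSucc_lt_last i).ne', Fin.castSucc_inj]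
      rw [hv, hL₀]
      simp [Pi.single_apply, Fin.snoc_castSucc]

end Diff

/-- With `P̂_Γ(x) = P_Γ(x,0)`:
(i) the projection of `∂P_Γ(u)` onto the first `n−1` coordinates equals
`∂P̂_Γ(ū − u_n ē)`; (ii) the projection of `∂P_Γ(ℝⁿ)` equals `∂P̂_Γ(ℝ^{n−1})`;
(iii) `P_Γ` is differentiable at `u` iff `P̂_Γ` is differentiable at `ū − u_n ē`;
(iv) if `P̂_Γ` has all partial derivatives at `ū − u_n ē`, then `P_Γ` is differentiable
at `u` with the stated gradient.  (Here the number of colors is `n + 1`.) -/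
theorem reduced_pressure_subdifferential
    (d n : ℕ) (hd : 0 < d)
    (Γ : Fin d → Set (Fin (n + 1) × Fin (n + 1)))
    (hne : ∃ φ : (Fin d → ℤ) → Fin (n + 1), AllowedZ Γ φ)
    (P : (Fin (n + 1) → ℝ) → ℝ)
    (hP : ∀ u, Tendsto (fun m : Fin d → ℕ =>
        Real.log (Z Γ m u) / (vol m : ℝ)) atTop (𝓝 (P u))) :
    (∀ u : Fin (n + 1) → ℝ,
      projv '' {y | Subgrad P u y} =
        {q | Subgrad (Phat P) (projv u - u (Fin.last n) • (1 : Fin n → ℝ)) q}) ∧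
    (projv '' (⋃ u : Fin (n + 1) → ℝ, {y | Subgrad P u y}) =
        ⋃ x : Fin n → ℝ, {q | Subgrad (Phat P) x q}) ∧
    (∀ u : Fin (n + 1) → ℝ,
      DiffPt P u ↔ DiffPt (Phat P) (projv u - u (Fin.last n) • (1 : Fin n → ℝ))) ∧
    (∀ (u : Fin (n + 1) → ℝ) (g : Fin n → ℝ),
      (∀ i : Fin n, HasDerivAt
          (fun t : ℝ => Phat P
            (Function.update (projv u - u (Fin.last n) • (1 : Fin n → ℝ)) i t))
          (g i) ((projv u - u (Fin.last n) • (1 : Fin n → ℝ)) i)) →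
      ∃ L : (Fin (n + 1) → ℝ) →L[ℝ] ℝ, HasFDerivAt P L u ∧
        gradOf L = Fin.snoc g (1 - ∑ i, g i)) := by
  have hshift : ∀ u t, P (u + t • (1 : Fin (n+1) → ℝ)) = P u + t := P_shift hne hP
  have hconv : ConvexOn ℝ Set.univ P := P_convex hne hP
  have hvm : ∀ u : Fin (n+1) → ℝ,
      projv u - u (Fin.last n) • (1 : Fin n → ℝ) = vm u := fun u => rfl
  refine ⟨?_, ?_, ?_, ?_⟩
  · -- (i)
    intro u
    rw [hvm]
    ext q
    constructor
    · rintro ⟨y, hy, rfl⟩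
      exact sub_forward hshift hy
    · intro hq
      exact ⟨Fin.snoc q (1 - ∑ i, q i), sub_backward hshift hq, projv_snoc q _⟩
  · -- (ii)
    ext q
    simp only [Set.mem_image, Set.mem_iUnion, Set.mem_setOf_eq]
    constructor
    · rintro ⟨y, ⟨u, hy⟩, rfl⟩
      exact ⟨vm u, sub_forward hshift hy⟩
    · rintro ⟨x, hq⟩
      refine ⟨Fin.snoc q (1 - ∑ i, q i), ⟨Fin.snoc x (0:ℝ), ?_⟩, projv_snoc q _⟩
      have hq' : Subgrad (Phat P) (vm (Fin.snoc x (0:ℝ))) q := by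
        rwa [vm_snoc_zero]
      exact sub_backward hshift hq'
  · -- (iii)
    intro u
    rw [hvm]
    constructor
    · rintro ⟨L, hL⟩
      exact ⟨L.comp (Smap n), diff_forward hshift hL⟩
    · rintro ⟨L', hL'⟩
      exact ⟨_, diff_backward hshift hL'⟩
  · -- (iv)
    intro u g hg
    have hg' : ∀ i, HasDerivAt (fun t => Phat P (Function.update (vm u) i t))
        (g i) ((vm u) i) := fun i => hg i
    have hPhc : ConvexOn ℝ Set.univ (Phat P) := Phat_convex hconv
    have hdiff := convexOn_hasFDerivAt hPhc (vm u) g hg'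
    refine ⟨((∑ i, g i • (ContinuousLinearMap.proj i : (Fin n → ℝ) →L[ℝ] ℝ)).comp (Vmap n)
        + ContinuousLinearMap.proj (Fin.last n)),
      diff_backward hshift hdiff, gradOf_eq ?_⟩
    intro x
    simp [ContinuousLinearMap.sum_apply]

end Soft
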